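/- Let e_y(y,t) = c·(K(y + at, t) − K(y − at, t)) where K is the heat kernel with diffusion coefficient b > 0, a ≠ 0, and c a constant. Then ‖e_y(·, s)‖_{L^1(ℝ)} → 0 as s → 0⁺. -/

import Mathlib

open Real MeasureTheory

/-- The one-dimensional heat kernel with diffusion coefficient `b`. -/
noncomputable def heatKernel (b y t : ℝ) : ℝ :=
  Real.exp (-(y ^ 2) / (4 * b * t)) / Real.sqrt (4 * Real.pi * b * t)

lemma hk_scale (b u a s : ℝ) (hb : 0 < b) (hs : 0 < s) :
    heatKernel b (Real.sqrt s * u + a * s) s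
      = Real.exp (-((u + a * Real.sqrt s) ^ 2) / (4 * b)) /
        (Real.sqrt (4 * Real.pi * b) * Real.sqrt s) := by
  have hss : Real.sqrt s * Real.sqrt s = s := Real.mul_self_sqrt hs.le
  have h2 : (Real.sqrt s * u + a * s) ^ 2 = s * (u + a * Real.sqrt s) ^ 2 := by
    linear_combination (u ^ 2 - a ^ 2 * s) * hss
  unfold heatKernel
  rw [h2, Real.sqrt_mul (by positivity : (0:ℝ) ≤ 4 * Real.pi * b)]
  have h3 : -(s * (u + a * Real.sqrt s) ^ 2) / (4 * b * s)
      = -((u + a * Real.sqrt s) ^ 2) / (4 * b) := by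
    field_simp
  rw [h3]

theorem stmt4 (b a c : ℝ) (hb : 0 < b) (ha : a ≠ 0) :
    Filter.Tendsto
      (fun s => ∫ y : ℝ, |c * (heatKernel b (y + a * s) s - heatKernel b (y - a * s) s)|)
      (nhdsWithin 0 (Set.Ioi 0)) (nhds 0) := by
  set E : ℝ → ℝ := fun v => Real.exp (-(v ^ 2) / (4 * b)) with hE
  set C : ℝ := |c| / Real.sqrt (4 * Real.pi * b) with hC
  -- Step 1: change of variables, on Ioi 0 the function equals
  -- s ↦ ∫ u, C * |E (u + a√s) - E (u - a√s)|
  have key : ∀ s ∈ Set.Ioi (0:ℝ),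
      (∫ y : ℝ, |c * (heatKernel b (y + a * s) s - heatKernel b (y - a * s) s)|)
        = ∫ u : ℝ, C * |E (u + a * Real.sqrt s) - E (u - a * Real.sqrt s)| := by
    intro s hs
    have hs : (0:ℝ) < s := hs
    have hsq : 0 < Real.sqrt s := Real.sqrt_pos.2 hs
    set g : ℝ → ℝ := fun y => |c * (heatKernel b (y + a * s) s - heatKernel b (y - a * s) s)|
      with hg
    have := MeasureTheory.Measure.integral_comp_mul_left g (Real.sqrt s)
    rw [abs_of_pos (inv_pos.2 hsq), smul_eq_mul] at this
    have h2 : (∫ y : ℝ, g y) = Real.sqrt s * ∫ x : ℝ, g (Real.sqrt s * x) := by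
      rw [this]; field_simp
    rw [h2, ← integral_const_mul]
    congr 1; funext u
    have hplus := hk_scale b u a s hb hs
    have hminus := hk_scale b u (-a) s hb hs
    simp only [neg_mul] at hminus
    have e1 : Real.sqrt s * u + -(a * s) = Real.sqrt s * u - a * s := by ring
    have e2 : u + -(a * Real.sqrt s) = u - a * Real.sqrt s := by ring
    rw [e1, e2] at hminus
    simp only [hg, hplus, hminus, hE, hC]
    rw [div_sub_div_same, abs_mul, abs_div, mul_comm (|c|),
      abs_of_pos (by positivity : (0:ℝ) < Real.sqrt (4 * Real.pi * b) * Real.sqrt s)]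
    field_simp
  -- Step 2: dominated convergence for the right-hand side
  have hmain : Filter.Tendsto
      (fun s => ∫ u : ℝ, C * |E (u + a * Real.sqrt s) - E (u - a * Real.sqrt s)|)
      (nhdsWithin 0 (Set.Ioi 0)) (nhds 0) := by
    have hI : Filter.Tendsto
        (fun s => ∫ u : ℝ, C * |E (u + a * Real.sqrt s) - E (u - a * Real.sqrt s)|)
        (nhdsWithin 0 (Set.Ioi 0)) (nhds (∫ _ : ℝ, (0:ℝ))) := by
      apply MeasureTheory.tendsto_integral_filter_of_dominated_convergence
          (fun u => 2 * C * (Real.exp (1 / (4 * b)) * Real.exp (-(1 / (8 * b)) * u ^ 2)))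
      · filter_upwards with s
        apply Continuous.aestronglyMeasurable
        fun_prop
      · have hmem : Set.Ioo (0:ℝ) (a ^ 2)⁻¹ ∈ nhdsWithin (0:ℝ) (Set.Ioi 0) :=
          Ioo_mem_nhdsGT_of_mem (Set.mem_Ico.2 ⟨le_refl (0:ℝ), by positivity⟩)
        filter_upwards [hmem] with s hs
        have hs0 : 0 < s := hs.1
        have hs1 : (a * Real.sqrt s) ^ 2 ≤ 1 := by
          rw [mul_pow, Real.sq_sqrt hs0.le]
          calc a ^ 2 * s ≤ a ^ 2 * (a ^ 2)⁻¹ := by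
                apply mul_le_mul_of_nonneg_left hs.2.le (sq_nonneg a)
            _ = 1 := by field_simp
        filter_upwards with u
        have hb4 : (0:ℝ) < 4 * b := by positivity
        have hbound : ∀ ε : ℝ, ε ^ 2 ≤ 1 →
            E (u + ε) ≤ Real.exp (1 / (4 * b)) * Real.exp (-(1 / (8 * b)) * u ^ 2) := by
          intro ε hε
          rw [hE, ← Real.exp_add]
          apply Real.exp_le_exp.2
          rw [div_le_iff₀ hb4] at *
          have h1 : u ^ 2 ≤ 2 * (u + ε) ^ 2 + 2 * ε ^ 2 := by nlinarith [sq_nonneg (u + 2 * ε)]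
          have h2 : -(u + ε) ^ 2 ≤ -u ^ 2 / 2 + 1 := by nlinarith
          calc -(u + ε) ^ 2 ≤ -u ^ 2 / 2 + 1 := h2
            _ = (1 / (4 * b) + -(1 / (8 * b)) * u ^ 2) * (4 * b) := by field_simp; ring
        have hEpos : ∀ v, 0 ≤ E v := fun v => Real.exp_nonneg _
        have hplus := hbound (a * Real.sqrt s) hs1
        have hminus := hbound (-(a * Real.sqrt s)) (by simpa using hs1)
        rw [(by ring : u + -(a * Real.sqrt s) = u - a * Real.sqrt s)] at hminus
        have habs : |E (u + a * Real.sqrt s) - E (u - a * Real.sqrt s)|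
            ≤ 2 * (Real.exp (1 / (4 * b)) * Real.exp (-(1 / (8 * b)) * u ^ 2)) := by
          calc |E (u + a * Real.sqrt s) - E (u - a * Real.sqrt s)|
              ≤ |E (u + a * Real.sqrt s)| + |E (u - a * Real.sqrt s)| := abs_sub _ _
            _ = E (u + a * Real.sqrt s) + E (u - a * Real.sqrt s) := by
                rw [abs_of_nonneg (hEpos _), abs_of_nonneg (hEpos _)]
            _ ≤ _ := by linarith
        have hCpos : 0 ≤ C := by rw [hC]; positivity
        rw [Real.norm_eq_abs, abs_mul, abs_of_nonneg hCpos, abs_abs]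
        calc C * |E (u + a * Real.sqrt s) - E (u - a * Real.sqrt s)|
            ≤ C * (2 * (Real.exp (1 / (4 * b)) * Real.exp (-(1 / (8 * b)) * u ^ 2))) :=
              mul_le_mul_of_nonneg_left habs hCpos
          _ = 2 * C * (Real.exp (1 / (4 * b)) * Real.exp (-(1 / (8 * b)) * u ^ 2)) := by ring
      · apply Integrable.const_mul
        apply Integrable.const_mul
        exact integrable_exp_neg_mul_sq (by positivity)
      · filter_upwards with u
        have hcont : Continuous fun s : ℝ =>
            C * |E (u + a * Real.sqrt s) - E (u - a * Real.sqrt s)| := by fun_prop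
        have := (hcont.tendsto 0).mono_left
          (nhdsWithin_le_nhds (s := Set.Ioi (0:ℝ)))
        simpa using this
    simpa using hI
  exact hmain.congr' (Filter.eventuallyEq_of_mem self_mem_nhdsWithin fun s hs => (key s hs).symm)
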